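/- SAGA gradient memory recursion bound: if g^{k+1}_i = B_i z^k when i = i_k and g^{k+1}_i = g^k_i otherwise, where i_k is sampled with probabilities p_i, then E_{i_k}[∑_i p_i⁻¹ ‖B_i z* − g^{k+1}_i‖²] = ∑_i p_i⁻¹ ‖B_i z* − g^k_i‖² + ∑_i ‖B_i(z^k − z*)‖² − ∑_i ‖B_i z* − g^k_i‖², which is at most L̄² ‖z^k − z*‖² + (1 − min_i p_i) ∑_i p_i⁻¹ ‖B_i z* − g^k_i‖². -/

import Mathlib

/-- SAGA gradient-memory recursion: with `g^{k+1}_i = B_i z^k` if `i = i_k`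
and `g^{k+1}_i = g^k_i` otherwise, `i_k` sampled with probabilities `p_i`,
the expectation of `∑_i p_i⁻¹ ‖B_i z* − g^{k+1}_i‖²` equals
`∑_i p_i⁻¹ ‖B_i z* − g^k_i‖² + ∑_i ‖B_i(z^k − z*)‖² − ∑_i ‖B_i z* − g^k_i‖²`,
which is at most `L̄² ‖z^k − z*‖² + (1 − min_i p_i) ∑_i p_i⁻¹ ‖B_i z* − g^k_i‖²`. -/
theorem saga_memory_recursion
    {Z : Type*} [NormedAddCommGroup Z] [InnerProductSpace ℝ Z]
    {n : ℕ} [NeZero n] (B : Fin n → Z →L[ℝ] Z) (zs zk : Z) (g : Fin n → Z)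
    (p : Fin n → ℝ) (hp : ∀ i, 0 < p i ∧ p i ≤ 1) (hsum : ∑ i, p i = 1)
    (Lbarsq : ℝ) (hL : ∀ z : Z, ∑ i, ‖B i z‖ ^ 2 ≤ Lbarsq * ‖z‖ ^ 2) :
    (∑ j, p j * ∑ i, (p i)⁻¹ * ‖B i zs - (if i = j then B j zk else g i)‖ ^ 2) =
        ∑ i, (p i)⁻¹ * ‖B i zs - g i‖ ^ 2 + ∑ i, ‖B i (zk - zs)‖ ^ 2 -
          ∑ i, ‖B i zs - g i‖ ^ 2 ∧
      (∑ j, p j * ∑ i, (p i)⁻¹ * ‖B i zs - (if i = j then B j zk else g i)‖ ^ 2) ≤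
        Lbarsq * ‖zk - zs‖ ^ 2 + (1 - ⨅ i, p i) * ∑ i, (p i)⁻¹ * ‖B i zs - g i‖ ^ 2 := by
  set S : ℝ := ∑ i, (p i)⁻¹ * ‖B i zs - g i‖ ^ 2 with hS
  have hnorm : ∀ j : Fin n, ‖B j zs - B j zk‖ = ‖B j (zk - zs)‖ := by
    intro j
    rw [map_sub, ← norm_neg]
    congr 1; abel
  have hinner : ∀ j : Fin n,
      (∑ i, (p i)⁻¹ * ‖B i zs - (if i = j then B j zk else g i)‖ ^ 2)
        = S + (p j)⁻¹ * (‖B j (zk - zs)‖ ^ 2 - ‖B j zs - g j‖ ^ 2) := by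
    intro j
    have : (∑ i, (p i)⁻¹ * ‖B i zs - (if i = j then B j zk else g i)‖ ^ 2)
        = ∑ i, ((p i)⁻¹ * ‖B i zs - g i‖ ^ 2
            + if i = j then (p i)⁻¹ * (‖B i (zk - zs)‖ ^ 2 - ‖B i zs - g i‖ ^ 2) else 0) := by
      apply Finset.sum_congr rfl
      intro i _
      by_cases h : i = j
      · subst h
        simp [hnorm i]
        ring
      · simp [h]
    rw [this, Finset.sum_add_distrib, Finset.sum_ite_eq' Finset.univ j
      (fun i => (p i)⁻¹ * (‖B i (zk - zs)‖ ^ 2 - ‖B i zs - g i‖ ^ 2))]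
    simp [hS]
  have key : (∑ j, p j * ∑ i, (p i)⁻¹ * ‖B i zs - (if i = j then B j zk else g i)‖ ^ 2)
      = S + ∑ i, ‖B i (zk - zs)‖ ^ 2 - ∑ i, ‖B i zs - g i‖ ^ 2 := by
    have : (∑ j, p j * ∑ i, (p i)⁻¹ * ‖B i zs - (if i = j then B j zk else g i)‖ ^ 2)
        = ∑ j, (p j * S + (‖B j (zk - zs)‖ ^ 2 - ‖B j zs - g j‖ ^ 2)) := by
      apply Finset.sum_congr rfl
      intro j _
      rw [hinner j]
      have hpj : p j ≠ 0 := (hp j).1.ne'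
      field_simp
    rw [this, Finset.sum_add_distrib, ← Finset.sum_mul, hsum, Finset.sum_sub_distrib]
    ring
  refine ⟨key, ?_⟩
  rw [key]
  have hbdd : BddBelow (Set.range p) := (Set.finite_range p).bddBelow
  have hinf_le : ∀ i, (⨅ i, p i) ≤ p i := fun i => ciInf_le hbdd i
  have h2 : (⨅ i, p i) * S ≤ ∑ i, ‖B i zs - g i‖ ^ 2 := by
    rw [hS, Finset.mul_sum]
    apply Finset.sum_le_sum
    intro i _
    have hpi : 0 < p i := (hp i).1
    have h1 : (⨅ i, p i) * (p i)⁻¹ ≤ 1 := by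
      rw [← div_eq_mul_inv, div_le_one hpi]
      exact hinf_le i
    calc (⨅ i, p i) * ((p i)⁻¹ * ‖B i zs - g i‖ ^ 2)
        = ((⨅ i, p i) * (p i)⁻¹) * ‖B i zs - g i‖ ^ 2 := by ring
      _ ≤ 1 * ‖B i zs - g i‖ ^ 2 := by
          apply mul_le_mul_of_nonneg_right h1 (by positivity)
      _ = ‖B i zs - g i‖ ^ 2 := one_mul _
  have h3 := hL (zk - zs)
  nlinarith [h2, h3]
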